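/- Let S̃ be the matrix obtained from S by removing its first row and first column, and let v = (v_i)_{i≥1} be a bounded sequence of real numbers. Then S̃v = v (i.e. v_i = Σ_{j≥1} S̃_{i,j} v_j for all i ≥ 1) if and only if v_n = β(n) v_1 for all n ≥ 1. -/

import Mathlib

/-- Fibonacci sequence with `F 0 = 1`, `F 1 = 2`, `F (n+2) = F (n+1) + F n`. -/
def fibF : ℕ → ℕ
  | 0 => 1
  | 1 => 2
  | (n+2) => fibF (n+1) + fibF n

lemma fibF_pos : ∀ n, 0 < fibF n
  | 0 => by simp [fibF]
  | 1 => by simp [fibF]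
  | (n+2) => by
      have h1 := fibF_pos (n+1)
      simp only [fibF]
      omega

lemma fibF_add_two (n : ℕ) : fibF (n+2) = fibF (n+1) + fibF n := rfl

lemma fibF_lt_succ : ∀ n, fibF n < fibF (n+1)
  | 0 => by simp [fibF]
  | (n+1) => by have := fibF_pos n; simp only [fibF]; omega

lemma fibF_strictMono : StrictMono fibF := strictMono_nat_of_lt_succ fibF_lt_succ

lemma fibF_mono : Monotone fibF := fibF_strictMono.monotone

lemma lt_fibF : ∀ n, n < fibF n
  | 0 => by simp [fibF]
  | 1 => by simp [fibF]
  | (n+2) => by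
      have h1 := lt_fibF (n+1)
      have h2 := fibF_pos n
      simp only [fibF]; omega

lemma fibF_le_two_mul : ∀ n, fibF (n+1) ≤ 2 * fibF n
  | 0 => by simp [fibF]
  | (n+1) => by
      have := (fibF_lt_succ n).le
      simp only [fibF]; omega

lemma sum_fibF_odd : ∀ s m : ℕ, m ≤ s →
    fibF (2*m) + ∑ j ∈ Finset.Ico m s, fibF (2*j+1) = fibF (2*s) := by
  intro s
  induction s with
  | zero =>
    intro m hm
    have h : m = 0 := by omega
    subst h
    rw [Finset.Ico_self, Finset.sum_empty]
    omega
  | succ s ih =>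
    intro m hm
    rcases Nat.lt_or_ge m (s+1) with h | h
    · have hms : m ≤ s := by omega
      rw [Finset.sum_Ico_succ_top hms]
      have h1 := ih m hms
      have h2 : fibF (2*(s+1)) = fibF (2*s+1) + fibF (2*s) := by
        rw [show 2*(s+1) = 2*s+2 from by omega]
        exact fibF_add_two (2*s)
      omega
    · have h2 : m = s+1 := by omega
      subst h2
      rw [Finset.Ico_self, Finset.sum_empty]
      omega

lemma sum_fibF_even : ∀ s m : ℕ, 1 ≤ m → m ≤ s + 1 →
    fibF (2*m-1) + ∑ j ∈ Finset.Icc m s, fibF (2*j) = fibF (2*s+1) := by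
  intro s
  induction s with
  | zero =>
    intro m hm1 hm2
    have h : m = 1 := by omega
    subst h
    rw [show Finset.Icc 1 0 = ∅ from rfl, Finset.sum_empty]
    norm_num
  | succ s ih =>
    intro m hm1 hm2
    rcases Nat.lt_or_ge m (s+2) with h | h
    · have hms : m ≤ s + 1 := by omega
      rw [Finset.sum_Icc_succ_top hms]
      have h1 := ih m hm1 (by omega)
      have h2 : fibF (2*(s+1)+1) = fibF (2*(s+1)) + fibF (2*s+1) := by
        rw [show 2*(s+1)+1 = (2*s+1)+2 from by omega, show 2*(s+1) = (2*s+1)+1 from by omega]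
        exact fibF_add_two (2*s+1)
      omega
    · have h2 : m = s+2 := by omega
      subst h2
      rw [Finset.Icc_eq_empty (by omega), Finset.sum_empty]
      rw [show 2*(s+2)-1 = 2*(s+1)+1 from by omega]
      omega

lemma sum_even_range : ∀ s : ℕ, (∑ j ∈ Finset.range (s+1), fibF (2*j)) + 1 = fibF (2*s+1) := by
  intro s
  induction s with
  | zero => simp [fibF]
  | succ s ih =>
    rw [Finset.sum_range_succ]
    have h2 : fibF (2*(s+1)+1) = fibF (2*(s+1)) + fibF (2*s+1) := by
      rw [show 2*(s+1)+1 = (2*s+1)+2 from by omega, show 2*(s+1) = (2*s+1)+1 from by omega]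
      exact fibF_add_two (2*s+1)
    omega

lemma sum_pairs (f : ℕ → ℕ) : ∀ s : ℕ,
    ∑ i ∈ Finset.range (2*s), f i = ∑ j ∈ Finset.range s, (f (2*j) + f (2*j+1)) := by
  intro s
  induction s with
  | zero => simp
  | succ s ih =>
    have h : 2*(s+1) = (2*s+1)+1 := by omega
    rw [h, Finset.sum_range_succ, show 2*s+1 = (2*s)+1 from rfl, Finset.sum_range_succ,
      Finset.sum_range_succ, ih]
    omega

lemma rep_lt : ∀ t : ℕ, ∀ D : Finset ℕ, (∀ i ∈ D, i ≤ t) → (∀ i ∈ D, i + 1 ∉ D) →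
    ∑ i ∈ D, fibF i < fibF (t+1) := by
  intro t
  induction t using Nat.strong_induction_on with
  | _ t ih =>
    intro D htop hsp
    rcases D.eq_empty_or_nonempty with rfl | hne
    · simpa using fibF_pos (t+1)
    · obtain ⟨t', ht'def⟩ : ∃ t', D.max' hne = t' := ⟨_, rfl⟩
      have ht'mem : t' ∈ D := ht'def ▸ D.max'_mem hne
      have ht'le : t' ≤ t := htop _ ht'mem
      have hsum : ∑ i ∈ D, fibF i = fibF t' + ∑ i ∈ D.erase t', fibF i :=
        (Finset.add_sum_erase D fibF ht'mem).symm
      have herase : ∀ x ∈ D.erase t', x ≤ t' - 2 := by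
        intro x hx
        have hx1 : x ∈ D := Finset.mem_of_mem_erase hx
        have hx2 : x ≤ t' := ht'def ▸ D.le_max' x hx1
        have hx3 : x ≠ t' := Finset.ne_of_mem_erase hx
        have hx4 : x + 1 ≠ t' := by
          intro hcontra
          exact hsp x hx1 (hcontra ▸ ht'mem)
        omega
      have hspe : ∀ i ∈ D.erase t', i + 1 ∉ D.erase t' := by
        intro i hi hcon
        exact hsp i (Finset.mem_of_mem_erase hi) (Finset.mem_of_mem_erase hcon)
      rcases Nat.lt_or_ge t' 2 with h0 | hpos
      · have he : D.erase t' = ∅ := by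
          rw [Finset.eq_empty_iff_forall_notMem]
          intro x hx
          have h1 := herase x hx
          have h2 := Finset.ne_of_mem_erase hx
          have h3 : x ≤ t' := ht'def ▸ D.le_max' x (Finset.mem_of_mem_erase hx)
          have h4 : x + 1 ≠ t' := fun hc => hsp x (Finset.mem_of_mem_erase hx) (hc ▸ ht'mem)
          omega
        rw [hsum, he, Finset.sum_empty]
        have h1 : fibF t' ≤ fibF t := fibF_mono ht'le
        have h2 : fibF t < fibF (t+1) := fibF_lt_succ t
        omega
      · have hlt : ∑ i ∈ D.erase t', fibF i < fibF (t'-2+1) :=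
          ih (t'-2) (by omega) _ herase hspe
        have hstep : fibF t' + fibF (t'-2+1) ≤ fibF (t'+1) := by
          match t', hpos with
          | (k+2), _ =>
            rw [show k+2-2+1 = k+1 from by omega]
            have h := fibF_add_two (k+1)
            rw [show k+1+2 = k+2+1 from by omega, show k+1+1 = k+2 from by omega] at h
            omega
        have hmono : fibF (t'+1) ≤ fibF (t+1) := fibF_mono (by omega)
        omega

lemma rep_ge (D : Finset ℕ) (t : ℕ) (ht : t ∈ D) : fibF t ≤ ∑ i ∈ D, fibF i :=
  Finset.single_le_sum (fun i _ => Nat.zero_le (fibF i)) ht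

def topIdx (n : ℕ) : ℕ := Nat.findGreatest (fun r => fibF r ≤ n) n

lemma findGreatest_fib {n t : ℕ} (h1 : fibF t ≤ n) (h2 : n < fibF (t+1)) : topIdx n = t := by
  unfold topIdx
  rw [Nat.findGreatest_eq_iff]
  refine ⟨?_, fun _ => h1, ?_⟩
  · have := lt_fibF t; omega
  · intro k hk hkn
    simp only [not_le]
    calc n < fibF (t+1) := h2
    _ ≤ fibF k := fibF_mono (by omega)

/-- Zeckendorf digits of `N` in the base `fibF`: `N = ∑ i, zeck N i * fibF i`,
with `zeck N i ∈ {0,1}` and no two consecutive `1`'s. -/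
def zeck (N i : ℕ) : ℕ :=
  if h : N = 0 then 0
  else if i = Nat.findGreatest (fun j => fibF j ≤ N) N then 1
  else zeck (N - fibF (Nat.findGreatest (fun j => fibF j ≤ N) N)) i
termination_by N
decreasing_by
  exact Nat.sub_lt (Nat.pos_of_ne_zero h) (fibF_pos _)

lemma zeck_eq_zero_of_lt : ∀ N, ∀ i, N < i → zeck N i = 0 := by
  intro N
  induction N using Nat.strong_induction_on with
  | _ N ih =>
    intro i hi
    rw [zeck]
    split
    · rfl
    · rename_i h
      have hkN : Nat.findGreatest (fun j => fibF j ≤ N) N ≤ N := Nat.findGreatest_le N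
      rw [if_neg (by omega)]
      exact ih _ (Nat.sub_lt (Nat.pos_of_ne_zero h) (fibF_pos _)) i
        (lt_of_le_of_lt (Nat.sub_le _ _) hi)

lemma exists_break0 (N : ℕ) : ∃ i, ¬(zeck N (2*i+1) = 1 ∧ zeck N (2*i) = 0) := by
  refine ⟨N + 1, ?_⟩
  have h : zeck N (2*(N+1)+1) = 0 := zeck_eq_zero_of_lt N _ (by omega)
  simp [h]

lemma exists_break1 (N : ℕ) : ∃ i, ¬(zeck N (2*i+2) = 1 ∧ zeck N (2*i+1) = 0) := by
  refine ⟨N + 1, ?_⟩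
  have h : zeck N (2*(N+1)+2) = 0 := zeck_eq_zero_of_lt N _ (by omega)
  simp [h]

lemma zeck_zero_left (i : ℕ) : zeck 0 i = 0 := by rw [zeck]; simp

lemma zeck_top {N : ℕ} (hN : N ≠ 0) : zeck N (topIdx N) = 1 := by
  rw [zeck, dif_neg hN,
    if_pos (show topIdx N = Nat.findGreatest (fun j => fibF j ≤ N) N from rfl)]

lemma zeck_rec {N i : ℕ} (hN : N ≠ 0) (hi : i ≠ topIdx N) :
    zeck N i = zeck (N - fibF (topIdx N)) i := by
  rw [zeck, dif_neg hN,
    if_neg (show ¬ i = Nat.findGreatest (fun j => fibF j ≤ N) N from hi)]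
  rfl

lemma fib_topIdx_le {N : ℕ} (hN : N ≠ 0) : fibF (topIdx N) ≤ N :=
  Nat.findGreatest_spec (P := fun r => fibF r ≤ N) (Nat.zero_le N)
    (show fibF 0 ≤ N by have := Nat.pos_of_ne_zero hN; simp [fibF]; omega)

lemma lt_fib_topIdx_succ (N : ℕ) : N < fibF (topIdx N + 1) := by
  by_contra h
  push_neg at h
  have h2 : topIdx N + 1 ≤ N := le_trans (le_of_lt (lt_fibF _)) h
  have h3 : topIdx N + 1 ≤ topIdx N :=
    Nat.le_findGreatest (P := fun r => fibF r ≤ N) h2 h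
  omega

lemma topIdx_le (N : ℕ) : topIdx N ≤ N := Nat.findGreatest_le N

lemma sub_top_lt {N : ℕ} (hN : N ≠ 0) : N - fibF (topIdx N) < fibF (topIdx N) := by
  have h1 := lt_fib_topIdx_succ N
  have h2 := fibF_le_two_mul (topIdx N)
  omega

lemma zeck_eq_zero_of_fib_gt : ∀ N i : ℕ, N < fibF i → zeck N i = 0 := by
  intro N
  induction N using Nat.strong_induction_on with
  | _ N ih =>
    intro i hi
    rcases eq_or_ne N 0 with rfl | hN
    · exact zeck_zero_left i
    · have hg : fibF (topIdx N) ≤ N := fib_topIdx_le hN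
      have hig : i ≠ topIdx N := by
        intro h
        rw [h] at hi
        omega
      rw [zeck_rec hN hig]
      exact ih _ (Nat.sub_lt (Nat.pos_of_ne_zero hN) (fibF_pos _)) i (by omega)

lemma zeck_le_one : ∀ N i : ℕ, zeck N i ≤ 1 := by
  intro N
  induction N using Nat.strong_induction_on with
  | _ N ih =>
    intro i
    rcases eq_or_ne N 0 with rfl | hN
    · rw [zeck_zero_left]; omega
    · rcases eq_or_ne i (topIdx N) with rfl | hi
      · rw [zeck_top hN]
      · rw [zeck_rec hN hi]
        exact ih _ (Nat.sub_lt (Nat.pos_of_ne_zero hN) (fibF_pos _)) i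

lemma zeck_sum : ∀ N : ℕ, ∑ i ∈ Finset.range (N+1), zeck N i * fibF i = N := by
  intro N
  induction N using Nat.strong_induction_on with
  | _ N ih =>
    rcases eq_or_ne N 0 with rfl | hN
    · simp [zeck_zero_left]
    · have hgle : topIdx N ≤ N := topIdx_le N
      have hfib : fibF (topIdx N) ≤ N := fib_topIdx_le hN
      have hMlt : N - fibF (topIdx N) < N := Nat.sub_lt (Nat.pos_of_ne_zero hN) (fibF_pos _)
      have hMfib : N - fibF (topIdx N) < fibF (topIdx N) := sub_top_lt hN
      have hmem : topIdx N ∈ Finset.range (N+1) := Finset.mem_range.mpr (by omega)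
      rw [← Finset.add_sum_erase _ _ hmem, zeck_top hN, one_mul]
      have hcg : ∀ i ∈ (Finset.range (N+1)).erase (topIdx N),
          zeck N i * fibF i = zeck (N - fibF (topIdx N)) i * fibF i := by
        intro i hi
        rw [zeck_rec hN (Finset.ne_of_mem_erase hi)]
      rw [Finset.sum_congr rfl hcg]
      rw [Finset.sum_erase _ (by rw [zeck_eq_zero_of_fib_gt _ _ hMfib, zero_mul])]
      have htr : ∑ i ∈ Finset.range (N+1), zeck (N - fibF (topIdx N)) i * fibF i
          = ∑ i ∈ Finset.range (N - fibF (topIdx N) + 1), zeck (N - fibF (topIdx N)) i * fibF i := by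
        symm
        apply Finset.sum_subset (Finset.range_subset_range.mpr (by omega))
        intro x _ hx2
        have hxa : ¬ (x < N - fibF (topIdx N) + 1) := fun h => hx2 (Finset.mem_range.mpr h)
        rw [zeck_eq_zero_of_lt _ x (by omega), zero_mul]
      rw [htr, ih _ hMlt]
      omega

lemma zeck_sparse : ∀ N i : ℕ, zeck N i = 1 → zeck N (i+1) = 0 := by
  intro N
  induction N using Nat.strong_induction_on with
  | _ N ih =>
    intro i h1
    rcases eq_or_ne N 0 with rfl | hN
    · rw [zeck_zero_left] at h1; omega
    · have hMlt : N - fibF (topIdx N) < N := Nat.sub_lt (Nat.pos_of_ne_zero hN) (fibF_pos _)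
      by_cases hc1 : i + 1 = topIdx N
      · have hig : i ≠ topIdx N := by omega
        rw [zeck_rec hN hig] at h1
        have hlt := lt_fib_topIdx_succ N
        have hfl : fibF (topIdx N) ≤ N := fib_topIdx_le hN
        have he : fibF (topIdx N + 1) = fibF (topIdx N) + fibF i := by
          have h := fibF_add_two i
          rw [show i+2 = i+1+1 from rfl] at h
          rw [hc1] at h
          exact h
        have : N - fibF (topIdx N) < fibF i := by omega
        rw [zeck_eq_zero_of_fib_gt _ _ this] at h1
        omega
      · by_cases hc2 : i = topIdx N
        · exact zeck_eq_zero_of_fib_gt N (i+1) (by rw [hc2]; exact lt_fib_topIdx_succ N)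
        · rw [zeck_rec hN hc2] at h1
          rw [zeck_rec hN hc1]
          exact ih _ hMlt i h1

/-- The number `s` of `10`-blocks carried in the stochastic Fibonacci adding machine:
if the digits of `N` end with `00(10)^s` (case `ε₀ = 0`) or with `00(10)^s1`
(case `ε₀ = 1`), this returns `s`. -/
def carryLen (N : ℕ) : ℕ :=
  if zeck N 0 = 0 then Nat.find (exists_break0 N) else Nat.find (exists_break1 N)

/-- `Pprod p t = p 1 * p 2 * ⋯ * p t`. -/
def Pprod (p : ℕ → ℝ) (t : ℕ) : ℝ := ∏ i ∈ Finset.Icc 1 t, p i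

/-- The transition matrix `S` of the Fibonacci stochastic adding machine associated to
the probability sequence `p`:  `S N N = 1 - p 1`;  if the digits of `N` end with
`00(10)^s` then `S N (N+1) = p 1 ⋯ p (s+1)` and `S N (N+1-F (2m)) = p 1 ⋯ p m * (1 - p (m+1))`
for `1 ≤ m ≤ s`;  if the digits of `N` end with `00(10)^s1` then
`S N (N+1) = p 1 ⋯ p (s+2)` and `S N (N+1-F (2m-1)) = p 1 ⋯ p m * (1 - p (m+1))` for
`1 ≤ m ≤ s+1`;  all other entries vanish. -/
noncomputable def Smat (p : ℕ → ℝ) (N M : ℕ) : ℝ :=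
  (if M = N then 1 - p 1 else 0) +
  if zeck N 0 = 0 then
    (if M = N + 1 then Pprod p (carryLen N + 1) else 0) +
    ∑ m ∈ Finset.Icc 1 (carryLen N),
      (if M = N + 1 - fibF (2*m) then Pprod p m * (1 - p (m+1)) else 0)
  else
    (if M = N + 1 then Pprod p (carryLen N + 2) else 0) +
    ∑ m ∈ Finset.Icc 1 (carryLen N + 1),
      (if M = N + 1 - fibF (2*m - 1) then Pprod p m * (1 - p (m+1)) else 0)

/-- `PiProd p r = Π_r`, i.e. `Π_{2n} = ∏_{i=2}^{n+1} 1/p_i²` and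
`Π_{2n+1} = (1/p_{n+2}) ∏_{i=2}^{n+1} 1/p_i²`. -/
noncomputable def PiProd (p : ℕ → ℝ) (r : ℕ) : ℝ :=
  (∏ i ∈ Finset.Icc 2 (r/2 + 1), (1 / p i)^2) * (if r % 2 = 1 then 1 / p (r/2 + 2) else 1)

/-- `betaFn p n = β(n) = Π_r` where `r` is the unique index with `F_r ≤ n < F_{r+1}`. -/
noncomputable def betaFn (p : ℕ → ℝ) (n : ℕ) : ℝ :=
  PiProd p (Nat.findGreatest (fun r => fibF r ≤ n) n)

lemma betaFn_interval (p : ℕ → ℝ) {n t : ℕ} (h1 : fibF t ≤ n) (h2 : n < fibF (t+1)) :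
    betaFn p n = PiProd p t := by
  unfold betaFn
  rw [show Nat.findGreatest (fun r => fibF r ≤ n) n = t from findGreatest_fib h1 h2]

lemma betaFn_top (p : ℕ → ℝ) (D : Finset ℕ) (t : ℕ) (ht : t ∈ D) (htop : ∀ i ∈ D, i ≤ t)
    (hsp : ∀ i ∈ D, i + 1 ∉ D) : betaFn p (∑ i ∈ D, fibF i) = PiProd p t :=
  betaFn_interval p (rep_ge D t ht) (rep_lt t D htop hsp)

lemma Pprod_succ (p : ℕ → ℝ) (t : ℕ) : Pprod p (t+1) = Pprod p t * p (t+1) := by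
  unfold Pprod
  rw [Finset.prod_Icc_succ_top (by omega : 1 ≤ t+1)]

lemma Pprod_one (p : ℕ → ℝ) : Pprod p 1 = p 1 := by simp [Pprod]

lemma Pprod_pos (p : ℕ → ℝ) (hp : ∀ i, 1 ≤ i → 0 < p i ∧ p i ≤ 1) (t : ℕ) :
    0 < Pprod p t :=
  Finset.prod_pos (fun i hi => (hp i (Finset.mem_Icc.mp hi).1).1)

lemma telescope (p : ℕ → ℝ) (s : ℕ) :
    ∑ m ∈ Finset.Icc 1 s, Pprod p m * (1 - p (m+1)) = p 1 - Pprod p (s+1) := by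
  induction s with
  | zero => simp [Pprod_one]
  | succ s ih =>
    rw [Finset.sum_Icc_succ_top (by omega : 1 ≤ s+1), ih, Pprod_succ p (s+1)]
    ring

lemma PiProd_zero (p : ℕ → ℝ) : PiProd p 0 = 1 := by
  simp [PiProd]

lemma PiProd_odd (p : ℕ → ℝ) (hp : ∀ i, 1 ≤ i → 0 < p i ∧ p i ≤ 1) (k : ℕ) :
    p (k+2) * PiProd p (2*k+2) = PiProd p (2*k+1) := by
  have hne : p (k+2) ≠ 0 := ne_of_gt (hp (k+2) (by omega)).1
  unfold PiProd
  rw [show (2*k+2)/2 = k+1 from by omega, show (2*k+2) % 2 = 0 from by omega,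
    show (2*k+1)/2 = k from by omega, show (2*k+1) % 2 = 1 from by omega]
  rw [if_neg (by norm_num : ¬(0:ℕ) = 1), if_pos rfl, mul_one]
  rw [Finset.prod_Icc_succ_top (show 2 ≤ k+1+1 by omega)]
  rw [show k+1+1 = k+2 from rfl]
  have hpp : p (k+2) * (1/p (k+2))^2 = 1/p (k+2) := by
    rw [one_div, pow_two, ← mul_assoc, mul_inv_cancel₀ hne, one_mul]
  linear_combination (∏ i ∈ Finset.Icc 2 (k+1), (1/p i)^2) * hpp

lemma PiProd_even (p : ℕ → ℝ) (hp : ∀ i, 1 ≤ i → 0 < p i ∧ p i ≤ 1) (s : ℕ) :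
    p (s+2) * PiProd p (2*s+1) = PiProd p (2*s) := by
  have hne : p (s+2) ≠ 0 := ne_of_gt (hp (s+2) (by omega)).1
  unfold PiProd
  rw [show (2*s+1)/2 = s from by omega, show (2*s+1) % 2 = 1 from by omega,
    show (2*s)/2 = s from by omega, show (2*s) % 2 = 0 from by omega]
  rw [if_neg (by norm_num : ¬(0:ℕ) = 1), if_pos rfl, mul_one]
  have hpp : p (s+2) * (1/p (s+2)) = 1 := by field_simp
  linear_combination (∏ i ∈ Finset.Icc 2 (s+1), (1/p i)^2) * hpp

lemma Smat_eq_zero (p : ℕ → ℝ) (N M : ℕ) (hM : N + 2 ≤ M) : Smat p N M = 0 := by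
  have h1 : ¬ M = N := by omega
  have h2 : ¬ M = N + 1 := by omega
  have h3 : ∀ k : ℕ, ¬ M = N + 1 - k := by intro k; omega
  simp only [Smat, if_neg h1, if_neg h2, zero_add]
  split
  · rw [Finset.sum_eq_zero (fun m _ => if_neg (h3 _))]
  · rw [Finset.sum_eq_zero (fun m _ => if_neg (h3 _))]

lemma tsum_row (p : ℕ → ℝ) (v : ℕ → ℝ) (N : ℕ) :
    ∑' j : ℕ, Smat p N (j+1) * v (j+1)
      = ∑ j ∈ Finset.range (N+1), Smat p N (j+1) * v (j+1) :=
  tsum_eq_sum (fun j hj => by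
    have hj' : ¬ j < N + 1 := fun h => hj (Finset.mem_range.mpr h)
    rw [Smat_eq_zero p N (j+1) (by omega), zero_mul])

lemma sum_col (n c : ℕ) (a : ℝ) (w : ℕ → ℝ) (hc : c ≤ n + 1) :
    ∑ j ∈ Finset.range (n+1), (if j + 1 = c then a else 0) * w (j+1)
      = if 1 ≤ c then a * w c else 0 := by
  match c with
  | 0 => simp
  | (c'+1) =>
    rw [if_pos (by omega : 1 ≤ c'+1)]
    have h : ∀ j : ℕ, (if j + 1 = c'+1 then a else 0) * w (j+1)
        = if j = c' then a * w (c'+1) else 0 := by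
      intro j
      by_cases h : j = c'
      · subst h; simp
      · rw [if_neg (by omega : ¬ j + 1 = c'+1), if_neg h, zero_mul]
    simp only [h]
    rw [Finset.sum_ite_eq' (Finset.range (n+1)) c' (fun _ => a * w (c'+1))]
    rw [if_pos (Finset.mem_range.mpr (by omega))]

lemma rowSum (p : ℕ → ℝ) (w : ℕ → ℝ) (N : ℕ) (hN : 1 ≤ N) :
    ∑ j ∈ Finset.range (N+1), Smat p N (j+1) * w (j+1) =
      (1 - p 1) * w N +
      (if zeck N 0 = 0 then
        Pprod p (carryLen N + 1) * w (N+1) +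
        ∑ m ∈ Finset.Icc 1 (carryLen N),
          Pprod p m * (1 - p (m+1)) * (if fibF (2*m) ≤ N then w (N + 1 - fibF (2*m)) else 0)
      else
        Pprod p (carryLen N + 2) * w (N+1) +
        ∑ m ∈ Finset.Icc 1 (carryLen N + 1),
          Pprod p m * (1 - p (m+1)) * (if fibF (2*m-1) ≤ N then w (N + 1 - fibF (2*m-1)) else 0)) := by
  have hdiag : ∑ j ∈ Finset.range (N+1), (if j+1 = N then 1 - p 1 else 0) * w (j+1)
      = (1 - p 1) * w N := by
    rw [sum_col N N _ w (by omega), if_pos hN]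
  have hsucc : ∀ a : ℝ, ∑ j ∈ Finset.range (N+1), (if j+1 = N+1 then a else 0) * w (j+1)
      = a * w (N+1) := fun a => by
    rw [sum_col N (N+1) a w le_rfl, if_pos (by omega : 1 ≤ N+1)]
  have hcol : ∀ (F : ℕ) (a : ℝ), ∑ j ∈ Finset.range (N+1), (if j+1 = N+1-F then a else 0) * w (j+1)
      = a * (if F ≤ N then w (N+1-F) else 0) := by
    intro F a
    rw [sum_col N (N+1-F) a w (by omega)]
    by_cases h : F ≤ N
    · rw [if_pos (by omega : 1 ≤ N+1-F), if_pos h]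
    · rw [if_neg (by omega : ¬ 1 ≤ N+1-F), if_neg h, mul_zero]
  by_cases h0 : zeck N 0 = 0
  · simp only [Smat, if_pos h0, add_mul, Finset.sum_add_distrib]
    rw [hdiag, hsucc]
    congr 1
    congr 1
    simp only [Finset.sum_mul]
    rw [Finset.sum_comm]
    exact Finset.sum_congr rfl (fun m _ => hcol (fibF (2*m)) _)
  · simp only [Smat, if_neg h0, add_mul, Finset.sum_add_distrib]
    rw [hdiag, hsucc]
    congr 1
    congr 1
    simp only [Finset.sum_mul]
    rw [Finset.sum_comm]
    exact Finset.sum_congr rfl (fun m _ => hcol (fibF (2*m-1)) _)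

lemma structureA (N : ℕ) (hN : 1 ≤ N) (h0 : zeck N 0 = 0) :
    ∃ D : Finset ℕ, (∀ i ∈ D, 2 * carryLen N + 2 ≤ i) ∧ (∀ i ∈ D, i + 1 ∉ D) ∧
      N + 1 = (∑ i ∈ D, fibF i) + fibF (2 * carryLen N) := by
  have hsdef : carryLen N = Nat.find (exists_break0 N) := by rw [carryLen, if_pos h0]
  have hblock : ∀ i, i < carryLen N → zeck N (2*i+1) = 1 ∧ zeck N (2*i) = 0 := by
    intro i hi
    have h := Nat.find_min (exists_break0 N) (m := i) (by omega)
    exact not_not.mp h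
  have hfail : ¬(zeck N (2*carryLen N+1) = 1 ∧ zeck N (2*carryLen N) = 0) := by
    rw [hsdef]; exact Nat.find_spec (exists_break0 N)
  have h2s : zeck N (2*carryLen N) = 0 := by
    rcases Nat.eq_zero_or_pos (carryLen N) with h | h
    · rw [h]; simpa using h0
    · have hb := hblock (carryLen N - 1) (by omega)
      have hsp := zeck_sparse N (2*(carryLen N - 1)+1) hb.1
      rw [show 2*(carryLen N - 1)+1+1 = 2*carryLen N from by omega] at hsp
      exact hsp
  have h2s1 : zeck N (2*carryLen N+1) = 0 := by
    have hle := zeck_le_one N (2*carryLen N+1)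
    by_contra h
    exact hfail ⟨by omega, h2s⟩
  set R := Finset.range (N+1+(2*carryLen N+2)) with hR
  have hZS : ∑ i ∈ R, zeck N i * fibF i = N := by
    conv_rhs => rw [← zeck_sum N]
    refine (Finset.sum_subset (Finset.range_subset_range.mpr (by omega)) ?_).symm
    intro x _ hx2
    have hxa : ¬ (x < N + 1) := fun h => hx2 (Finset.mem_range.mpr h)
    rw [zeck_eq_zero_of_lt N x (by omega), zero_mul]
  refine ⟨R.filter (fun i => 2*carryLen N+2 ≤ i ∧ zeck N i = 1), ?_, ?_, ?_⟩
  · intro i hi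
    exact (Finset.mem_filter.mp hi).2.1
  · intro i hi hi1
    have h1 := (Finset.mem_filter.mp hi).2.2
    have h2 := (Finset.mem_filter.mp hi1).2.2
    have h3 := zeck_sparse N i h1
    omega
  · have hsplit := Finset.sum_filter_add_sum_filter_not R (fun i => 2*carryLen N+2 ≤ i)
      (fun i => zeck N i * fibF i)
    have hhigh : ∑ i ∈ R.filter (fun i => 2*carryLen N+2 ≤ i), zeck N i * fibF i
        = ∑ i ∈ R.filter (fun i => 2*carryLen N+2 ≤ i ∧ zeck N i = 1), fibF i := by
      rw [Finset.sum_filter, Finset.sum_filter]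
      apply Finset.sum_congr rfl
      intro i _
      have hle := zeck_le_one N i
      by_cases h1 : zeck N i = 1
      · by_cases h2 : 2*carryLen N+2 ≤ i <;> simp [h1, h2]
      · have h0' : zeck N i = 0 := by omega
        by_cases h2 : 2*carryLen N+2 ≤ i <;> simp [h0', h2]
    have hlowset : R.filter (fun i => ¬(2*carryLen N+2 ≤ i)) = Finset.range (2*carryLen N+2) := by
      ext x
      simp only [hR, Finset.mem_filter, Finset.mem_range, not_le]
      omega
    have hlow : ∑ i ∈ Finset.range (2*carryLen N+2), zeck N i * fibF i
        = ∑ j ∈ Finset.range (carryLen N), fibF (2*j+1) := by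
      rw [show 2*carryLen N+2 = 2*(carryLen N+1) from by omega, sum_pairs]
      rw [Finset.sum_range_succ]
      have hz1 : zeck N (2*carryLen N) * fibF (2*carryLen N)
          + zeck N (2*carryLen N+1) * fibF (2*carryLen N+1) = 0 := by
        rw [h2s, h2s1]; simp
      rw [hz1, add_zero]
      apply Finset.sum_congr rfl
      intro j hj
      have hb := hblock j (Finset.mem_range.mp hj)
      rw [hb.1, hb.2]; simp
    have hfib : fibF (2*0) + ∑ j ∈ Finset.Ico 0 (carryLen N), fibF (2*j+1)
        = fibF (2*carryLen N) := sum_fibF_odd (carryLen N) 0 (Nat.zero_le _)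
    have hf0 : fibF (2*0) = 1 := rfl
    rw [← Finset.range_eq_Ico] at hfib
    rw [hlowset] at hsplit
    rw [hhigh] at hsplit
    omega

lemma structureB (N : ℕ) (hN : 1 ≤ N) (h0 : ¬ zeck N 0 = 0) :
    ∃ D : Finset ℕ, (∀ i ∈ D, 2 * carryLen N + 3 ≤ i) ∧ (∀ i ∈ D, i + 1 ∉ D) ∧
      N + 1 = (∑ i ∈ D, fibF i) + fibF (2 * carryLen N + 1) := by
  have h0' : zeck N 0 = 1 := by
    have := zeck_le_one N 0; omega
  have hsdef : carryLen N = Nat.find (exists_break1 N) := by rw [carryLen, if_neg h0]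
  have hblock : ∀ i, i < carryLen N → zeck N (2*i+2) = 1 ∧ zeck N (2*i+1) = 0 := by
    intro i hi
    have h := Nat.find_min (exists_break1 N) (m := i) (by omega)
    exact not_not.mp h
  have hfail : ¬(zeck N (2*carryLen N+2) = 1 ∧ zeck N (2*carryLen N+1) = 0) := by
    rw [hsdef]; exact Nat.find_spec (exists_break1 N)
  have heven : ∀ j, j ≤ carryLen N → zeck N (2*j) = 1 := by
    intro j hj
    rcases Nat.eq_zero_or_pos j with h | h
    · rw [h]; simpa using h0'
    · have hb := hblock (j-1) (by omega)
      rw [show 2*(j-1)+2 = 2*j from by omega] at hb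
      exact hb.1
  have hodd : ∀ j, j ≤ carryLen N → zeck N (2*j+1) = 0 := by
    intro j hj
    exact zeck_sparse N (2*j) (heven j hj)
  have h2s2 : zeck N (2*carryLen N+2) = 0 := by
    have hle := zeck_le_one N (2*carryLen N+2)
    by_contra h
    exact hfail ⟨by omega, hodd (carryLen N) le_rfl⟩
  set R := Finset.range (N+1+(2*carryLen N+3)) with hR
  have hZS : ∑ i ∈ R, zeck N i * fibF i = N := by
    conv_rhs => rw [← zeck_sum N]
    refine (Finset.sum_subset (Finset.range_subset_range.mpr (by omega)) ?_).symm
    intro x _ hx2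
    have hxa : ¬ (x < N + 1) := fun h => hx2 (Finset.mem_range.mpr h)
    rw [zeck_eq_zero_of_lt N x (by omega), zero_mul]
  refine ⟨R.filter (fun i => 2*carryLen N+3 ≤ i ∧ zeck N i = 1), ?_, ?_, ?_⟩
  · intro i hi
    exact (Finset.mem_filter.mp hi).2.1
  · intro i hi hi1
    have h1 := (Finset.mem_filter.mp hi).2.2
    have h2 := (Finset.mem_filter.mp hi1).2.2
    have h3 := zeck_sparse N i h1
    omega
  · have hsplit := Finset.sum_filter_add_sum_filter_not R (fun i => 2*carryLen N+3 ≤ i)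
      (fun i => zeck N i * fibF i)
    have hhigh : ∑ i ∈ R.filter (fun i => 2*carryLen N+3 ≤ i), zeck N i * fibF i
        = ∑ i ∈ R.filter (fun i => 2*carryLen N+3 ≤ i ∧ zeck N i = 1), fibF i := by
      rw [Finset.sum_filter, Finset.sum_filter]
      apply Finset.sum_congr rfl
      intro i _
      have hle := zeck_le_one N i
      by_cases h1 : zeck N i = 1
      · by_cases h2 : 2*carryLen N+3 ≤ i <;> simp [h1, h2]
      · have h0'' : zeck N i = 0 := by omega
        by_cases h2 : 2*carryLen N+3 ≤ i <;> simp [h0'', h2]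
    have hlowset : R.filter (fun i => ¬(2*carryLen N+3 ≤ i)) = Finset.range (2*carryLen N+3) := by
      ext x
      simp only [hR, Finset.mem_filter, Finset.mem_range, not_le]
      omega
    have hlow : ∑ i ∈ Finset.range (2*carryLen N+3), zeck N i * fibF i
        = ∑ j ∈ Finset.range (carryLen N + 1), fibF (2*j) := by
      rw [show 2*carryLen N+3 = (2*(carryLen N+1))+1 from by omega, Finset.sum_range_succ]
      have hz1 : zeck N (2*(carryLen N+1)) * fibF (2*(carryLen N+1)) = 0 := by
        rw [show 2*(carryLen N+1) = 2*carryLen N+2 from by omega, h2s2, zero_mul]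
      rw [hz1, add_zero, sum_pairs]
      apply Finset.sum_congr rfl
      intro j hj
      have hj' : j ≤ carryLen N := by
        have := Finset.mem_range.mp hj; omega
      rw [heven j hj', hodd j hj']; simp
    have hfib : (∑ j ∈ Finset.range (carryLen N + 1), fibF (2*j)) + 1
        = fibF (2*carryLen N+1) := sum_even_range (carryLen N)
    rw [hlowset] at hsplit
    rw [hhigh] at hsplit
    omega

lemma beta_eigen (p : ℕ → ℝ) (hp : ∀ i, 1 ≤ i → 0 < p i ∧ p i ≤ 1) (N : ℕ) (hN : 1 ≤ N) :
    ∑ j ∈ Finset.range (N+1), Smat p N (j+1) * betaFn p (j+1) = betaFn p N := by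
  rw [rowSum p (betaFn p) N hN]
  by_cases h0 : zeck N 0 = 0
  · rw [if_pos h0]
    obtain ⟨D, hD2, hDsp, hsum⟩ := structureA N hN h0
    rcases D.eq_empty_or_nonempty with rfl | hDne
    · -- empty prefix : N + 1 = fibF (2 * carryLen N)
      simp only [Finset.sum_empty, zero_add] at hsum
      rcases Nat.eq_zero_or_pos (carryLen N) with hc | hc
      · rw [hc] at hsum
        have : fibF (2*0) = 1 := rfl
        omega
      obtain ⟨s', hs'⟩ : ∃ s', carryLen N = s'+1 := ⟨carryLen N - 1, by omega⟩
      rw [hs'] at hsum ⊢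
      rw [show 2*(s'+1) = 2*s'+2 from by omega] at hsum
      have e1 : fibF (2*s'+2) = fibF (2*s'+1) + fibF (2*s') := fibF_add_two (2*s')
      have hp1 := fibF_pos (2*s')
      have hp2 := fibF_pos (2*s'+1)
      have hβN : betaFn p N = PiProd p (2*s'+1) :=
        betaFn_interval p (by omega)
          (by rw [show 2*s'+1+1 = 2*s'+2 from by omega]; omega)
      have hβN1 : betaFn p (N+1) = PiProd p (2*s'+2) := by
        refine betaFn_interval p (by omega) ?_
        have := fibF_lt_succ (2*s'+2)
        omega
      rw [hβN, hβN1]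
      rw [Finset.sum_Icc_succ_top (by omega : 1 ≤ s'+1)]
      have htopf : ¬ (fibF (2*(s'+1)) ≤ N) := by
        rw [show 2*(s'+1) = 2*s'+2 from by omega]
        omega
      rw [if_neg htopf, mul_zero, add_zero]
      have hterm : ∀ m ∈ Finset.Icc 1 s', Pprod p m * (1 - p (m+1)) *
            (if fibF (2*m) ≤ N then betaFn p (N + 1 - fibF (2*m)) else 0)
          = Pprod p m * (1 - p (m+1)) * PiProd p (2*s'+1) := by
        intro m hm
        obtain ⟨hm1, hm2⟩ := Finset.mem_Icc.mp hm
        have hmono1 : fibF (2*m) ≤ fibF (2*s') := fibF_mono (by omega)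
        have hfle : fibF (2*m) ≤ N := by omega
        rw [if_pos hfle]
        have hpm := fibF_pos (2*m)
        have hb : betaFn p (N + 1 - fibF (2*m)) = PiProd p (2*s'+1) := by
          refine betaFn_interval p (by omega) ?_
          rw [show 2*s'+1+1 = 2*s'+2 from by omega]
          omega
        rw [hb]
      rw [Finset.sum_congr rfl hterm, ← Finset.sum_mul, telescope p s']
      have hkey : Pprod p (s'+2) * PiProd p (2*s'+2) = Pprod p (s'+1) * PiProd p (2*s'+1) := by
        have h1 := PiProd_odd p hp s'
        have h2 := Pprod_succ p (s'+1)
        rw [show s'+1+1 = s'+2 from rfl] at h2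
        linear_combination PiProd p (2*s'+2) * h2 + Pprod p (s'+1) * h1
      rw [show s'+1+1 = s'+2 from rfl]
      linear_combination hkey
    · -- nonempty prefix
      obtain ⟨t, htdef⟩ : ∃ t, D.max' hDne = t := ⟨_, rfl⟩
      have htmem : t ∈ D := htdef ▸ D.max'_mem hDne
      have htle : ∀ i ∈ D, i ≤ t := fun i hi => htdef ▸ D.le_max' i hi
      have ht2 : 2*carryLen N + 2 ≤ t := hD2 t htmem
      have hfp := fibF_pos (2*carryLen N)
      have hDle : (∑ i ∈ D, fibF i) ≤ N := by omega
      have hDge : fibF t ≤ ∑ i ∈ D, fibF i := rep_ge D t htmem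
      have hunion : ∀ m : ℕ, betaFn p ((∑ i ∈ D, fibF i)
          + ∑ j ∈ Finset.Ico m (carryLen N), fibF (2*j+1)) = PiProd p t := by
        intro m
        have himg : ∑ i ∈ (Finset.Ico m (carryLen N)).image (fun j => 2*j+1), fibF i
            = ∑ j ∈ Finset.Ico m (carryLen N), fibF (2*j+1) :=
          Finset.sum_image (by intro a _ b _ h; simp only at h; omega)
        have hdisj : Disjoint D ((Finset.Ico m (carryLen N)).image (fun j => 2*j+1)) := by
          rw [Finset.disjoint_right]
          intro a ha haD
          obtain ⟨j, hj, rfl⟩ := Finset.mem_image.mp ha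
          have h1 := hD2 _ haD
          have h2 := (Finset.mem_Ico.mp hj).2
          omega
        have hb := betaFn_top p (D ∪ (Finset.Ico m (carryLen N)).image (fun j => 2*j+1)) t
          (Finset.mem_union_left _ htmem)
          (by
            intro i hi
            rcases Finset.mem_union.mp hi with h | h
            · exact htle i h
            · obtain ⟨j, hj, rfl⟩ := Finset.mem_image.mp h
              have := (Finset.mem_Ico.mp hj).2
              omega)
          (by
            intro i hi hcon
            rcases Finset.mem_union.mp hi with h | h <;>
              rcases Finset.mem_union.mp hcon with h' | h'
            · exact hDsp i h h'
            · obtain ⟨j, hj, hje⟩ := Finset.mem_image.mp h'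
              have := hD2 i h
              have := (Finset.mem_Ico.mp hj).2
              omega
            · obtain ⟨j, hj, hje⟩ := Finset.mem_image.mp h
              have := hD2 _ h'
              have := (Finset.mem_Ico.mp hj).2
              omega
            · obtain ⟨j, hj, hje⟩ := Finset.mem_image.mp h
              obtain ⟨j', hj', hje'⟩ := Finset.mem_image.mp h'
              omega)
        rw [Finset.sum_union hdisj, himg] at hb
        exact hb
      have hof : fibF (2*0) + ∑ j ∈ Finset.Ico 0 (carryLen N), fibF (2*j+1)
          = fibF (2*carryLen N) := sum_fibF_odd _ 0 (Nat.zero_le _)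
      have hf0 : fibF (2*0) = 1 := rfl
      have hβN : betaFn p N = PiProd p t := by
        have h1 := hunion 0
        have hNeq : N = (∑ i ∈ D, fibF i) + ∑ j ∈ Finset.Ico 0 (carryLen N), fibF (2*j+1) := by
          omega
        rw [hNeq]
        exact h1
      have hβN1 : betaFn p (N+1) = PiProd p t := by
        have hdisj : Disjoint D ({2*carryLen N} : Finset ℕ) := by
          rw [Finset.disjoint_right]
          intro a ha haD
          rw [Finset.mem_singleton] at ha
          have := hD2 _ haD
          omega
        have hb := betaFn_top p (D ∪ {2*carryLen N}) t (Finset.mem_union_left _ htmem)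
          (by
            intro i hi
            rcases Finset.mem_union.mp hi with h | h
            · exact htle i h
            · rw [Finset.mem_singleton] at h
              omega)
          (by
            intro i hi hcon
            rcases Finset.mem_union.mp hi with h | h <;>
              rcases Finset.mem_union.mp hcon with h' | h'
            · exact hDsp i h h'
            · rw [Finset.mem_singleton] at h'
              have := hD2 i h
              omega
            · rw [Finset.mem_singleton] at h
              have := hD2 _ h'
              omega
            · rw [Finset.mem_singleton] at h
              rw [Finset.mem_singleton] at h'
              omega)
        rw [Finset.sum_union hdisj, Finset.sum_singleton] at hb
        rw [hsum]
        exact hb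
      have hterm : ∀ m ∈ Finset.Icc 1 (carryLen N), Pprod p m * (1 - p (m+1)) *
            (if fibF (2*m) ≤ N then betaFn p (N + 1 - fibF (2*m)) else 0)
          = Pprod p m * (1 - p (m+1)) * PiProd p t := by
        intro m hm
        obtain ⟨hm1, hm2⟩ := Finset.mem_Icc.mp hm
        have hmono : fibF (2*m) ≤ fibF t := fibF_mono (by omega)
        have hfle : fibF (2*m) ≤ N := by omega
        rw [if_pos hfle]
        have hval := sum_fibF_odd (carryLen N) m (by omega)
        have heq : N + 1 - fibF (2*m)
            = (∑ i ∈ D, fibF i) + ∑ j ∈ Finset.Ico m (carryLen N), fibF (2*j+1) := by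
          omega
        rw [heq, hunion m]
      rw [Finset.sum_congr rfl hterm, ← Finset.sum_mul, telescope p (carryLen N), hβN, hβN1]
      ring
  · rw [if_neg h0]
    obtain ⟨D, hD2, hDsp, hsum⟩ := structureB N hN h0
    rcases D.eq_empty_or_nonempty with rfl | hDne
    · -- empty prefix : N + 1 = fibF (2 * carryLen N + 1)
      simp only [Finset.sum_empty, zero_add] at hsum
      have e1 : fibF (2*carryLen N+2) = fibF (2*carryLen N+1) + fibF (2*carryLen N) :=
        fibF_add_two (2*carryLen N)
      have hp1 := fibF_pos (2*carryLen N)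
      have hp2 := fibF_pos (2*carryLen N+1)
      have hlt := fibF_lt_succ (2*carryLen N)
      have hβN : betaFn p N = PiProd p (2*carryLen N) :=
        betaFn_interval p (by omega) (by omega)
      have hβN1 : betaFn p (N+1) = PiProd p (2*carryLen N+1) := by
        refine betaFn_interval p (by omega) ?_
        rw [show 2*carryLen N+1+1 = 2*carryLen N+2 from by omega]
        omega
      rw [hβN, hβN1]
      rw [Finset.sum_Icc_succ_top (by omega : 1 ≤ carryLen N+1)]
      have htopf : ¬ (fibF (2*(carryLen N+1)-1) ≤ N) := by
        rw [show 2*(carryLen N+1)-1 = 2*carryLen N+1 from by omega]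
        omega
      rw [if_neg htopf, mul_zero, add_zero]
      have hterm : ∀ m ∈ Finset.Icc 1 (carryLen N), Pprod p m * (1 - p (m+1)) *
            (if fibF (2*m-1) ≤ N then betaFn p (N + 1 - fibF (2*m-1)) else 0)
          = Pprod p m * (1 - p (m+1)) * PiProd p (2*carryLen N) := by
        intro m hm
        obtain ⟨hm1, hm2⟩ := Finset.mem_Icc.mp hm
        have e2 : fibF (2*carryLen N+1) = fibF (2*carryLen N) + fibF (2*carryLen N-1) := by
          have h := fibF_add_two (2*carryLen N-1)
          rw [show 2*carryLen N-1+2 = 2*carryLen N+1 from by omega,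
            show 2*carryLen N-1+1 = 2*carryLen N from by omega] at h
          exact h
        have hmono : fibF (2*m-1) ≤ fibF (2*carryLen N-1) := fibF_mono (by omega)
        have hfle : fibF (2*m-1) ≤ N := by omega
        rw [if_pos hfle]
        have hpm := fibF_pos (2*m-1)
        have hb : betaFn p (N + 1 - fibF (2*m-1)) = PiProd p (2*carryLen N) := by
          refine betaFn_interval p (by omega) (by omega)
        rw [hb]
      rw [Finset.sum_congr rfl hterm, ← Finset.sum_mul, telescope p (carryLen N)]
      have hkey : Pprod p (carryLen N+2) * PiProd p (2*carryLen N+1)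
          = Pprod p (carryLen N+1) * PiProd p (2*carryLen N) := by
        have h1 := PiProd_even p hp (carryLen N)
        have h2 := Pprod_succ p (carryLen N+1)
        rw [show carryLen N+1+1 = carryLen N+2 from rfl] at h2
        linear_combination PiProd p (2*carryLen N+1) * h2 + Pprod p (carryLen N+1) * h1
      linear_combination hkey
    · -- nonempty prefix
      obtain ⟨t, htdef⟩ : ∃ t, D.max' hDne = t := ⟨_, rfl⟩
      have htmem : t ∈ D := htdef ▸ D.max'_mem hDne
      have htle : ∀ i ∈ D, i ≤ t := fun i hi => htdef ▸ D.le_max' i hi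
      have ht2 : 2*carryLen N + 3 ≤ t := hD2 t htmem
      have hfp := fibF_pos (2*carryLen N+1)
      have hDle : (∑ i ∈ D, fibF i) ≤ N := by omega
      have hDge : fibF t ≤ ∑ i ∈ D, fibF i := rep_ge D t htmem
      have hunion : ∀ m : ℕ, betaFn p ((∑ i ∈ D, fibF i)
          + ∑ j ∈ Finset.Icc m (carryLen N), fibF (2*j)) = PiProd p t := by
        intro m
        have himg : ∑ i ∈ (Finset.Icc m (carryLen N)).image (fun j => 2*j), fibF i
            = ∑ j ∈ Finset.Icc m (carryLen N), fibF (2*j) :=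
          Finset.sum_image (by intro a _ b _ h; simp only at h; omega)
        have hdisj : Disjoint D ((Finset.Icc m (carryLen N)).image (fun j => 2*j)) := by
          rw [Finset.disjoint_right]
          intro a ha haD
          obtain ⟨j, hj, rfl⟩ := Finset.mem_image.mp ha
          have h1 := hD2 _ haD
          have h2 := (Finset.mem_Icc.mp hj).2
          omega
        have hb := betaFn_top p (D ∪ (Finset.Icc m (carryLen N)).image (fun j => 2*j)) t
          (Finset.mem_union_left _ htmem)
          (by
            intro i hi
            rcases Finset.mem_union.mp hi with h | h
            · exact htle i h
            · obtain ⟨j, hj, rfl⟩ := Finset.mem_image.mp h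
              have := (Finset.mem_Icc.mp hj).2
              omega)
          (by
            intro i hi hcon
            rcases Finset.mem_union.mp hi with h | h <;>
              rcases Finset.mem_union.mp hcon with h' | h'
            · exact hDsp i h h'
            · obtain ⟨j, hj, hje⟩ := Finset.mem_image.mp h'
              have := hD2 i h
              have := (Finset.mem_Icc.mp hj).2
              omega
            · obtain ⟨j, hj, hje⟩ := Finset.mem_image.mp h
              have := hD2 _ h'
              have := (Finset.mem_Icc.mp hj).2
              omega
            · obtain ⟨j, hj, hje⟩ := Finset.mem_image.mp h
              obtain ⟨j', hj', hje'⟩ := Finset.mem_image.mp h'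
              omega)
        rw [Finset.sum_union hdisj, himg] at hb
        exact hb
      have hicc : Finset.Icc 0 (carryLen N) = Finset.range (carryLen N + 1) := by
        rw [Finset.range_eq_Ico, Finset.Ico_add_one_right_eq_Icc]
      have hev := sum_even_range (carryLen N)
      have hβN : betaFn p N = PiProd p t := by
        have h1 := hunion 0
        rw [hicc] at h1
        have hNeq : N = (∑ i ∈ D, fibF i)
            + ∑ j ∈ Finset.range (carryLen N + 1), fibF (2*j) := by
          omega
        rw [hNeq]
        exact h1
      have hβN1 : betaFn p (N+1) = PiProd p t := by
        have hdisj : Disjoint D ({2*carryLen N+1} : Finset ℕ) := by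
          rw [Finset.disjoint_right]
          intro a ha haD
          rw [Finset.mem_singleton] at ha
          have := hD2 _ haD
          omega
        have hb := betaFn_top p (D ∪ {2*carryLen N+1}) t (Finset.mem_union_left _ htmem)
          (by
            intro i hi
            rcases Finset.mem_union.mp hi with h | h
            · exact htle i h
            · rw [Finset.mem_singleton] at h
              omega)
          (by
            intro i hi hcon
            rcases Finset.mem_union.mp hi with h | h <;>
              rcases Finset.mem_union.mp hcon with h' | h'
            · exact hDsp i h h'
            · rw [Finset.mem_singleton] at h'
              have := hD2 i h
              omega
            · rw [Finset.mem_singleton] at h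
              have := hD2 _ h'
              omega
            · rw [Finset.mem_singleton] at h
              rw [Finset.mem_singleton] at h'
              omega)
        rw [Finset.sum_union hdisj, Finset.sum_singleton] at hb
        rw [hsum]
        exact hb
      have hterm : ∀ m ∈ Finset.Icc 1 (carryLen N + 1), Pprod p m * (1 - p (m+1)) *
            (if fibF (2*m-1) ≤ N then betaFn p (N + 1 - fibF (2*m-1)) else 0)
          = Pprod p m * (1 - p (m+1)) * PiProd p t := by
        intro m hm
        obtain ⟨hm1, hm2⟩ := Finset.mem_Icc.mp hm
        have hmono : fibF (2*m-1) ≤ fibF t := fibF_mono (by omega)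
        have hfle : fibF (2*m-1) ≤ N := by omega
        rw [if_pos hfle]
        have hval := sum_fibF_even (carryLen N) m hm1 hm2
        have heq : N + 1 - fibF (2*m-1)
            = (∑ i ∈ D, fibF i) + ∑ j ∈ Finset.Icc m (carryLen N), fibF (2*j) := by
          omega
        rw [heq, hunion m]
      rw [Finset.sum_congr rfl hterm, ← Finset.sum_mul, telescope p (carryLen N + 1),
        hβN, hβN1]
      rw [show carryLen N+1+1 = carryLen N+2 from rfl]
      ring

lemma betaFn_one (p : ℕ → ℝ) : betaFn p 1 = 1 := by
  have h : betaFn p 1 = PiProd p 0 :=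
    betaFn_interval p (by norm_num [fibF]) (by norm_num [fibF])
  rw [h, PiProd_zero]

/-- Let `S̃` be `S` with its first row and column removed, and let
`v = (v_i)_{i ≥ 1}` be a bounded real sequence.  Then `S̃ v = v` (i.e.
`v i = ∑_{j ≥ 1} S̃ i j * v j` for all `i ≥ 1`) if and only if `v n = β(n) * v 1` for
all `n ≥ 1`. -/
theorem stmt4 (p : ℕ → ℝ) (hp : ∀ i, 1 ≤ i → 0 < p i ∧ p i ≤ 1)
    (v : ℕ → ℝ) (hv : ∃ C : ℝ, ∀ i, |v i| ≤ C) :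
    (∀ i, 1 ≤ i → v i = ∑' j : ℕ, Smat p i (j+1) * v (j+1)) ↔
    (∀ n, 1 ≤ n → v n = betaFn p n * v 1) := by
  constructor
  · intro hE n hn
    induction n using Nat.strong_induction_on with
    | _ n ih =>
      rcases eq_or_lt_of_le hn with h1 | h1
      · rw [← h1, betaFn_one, one_mul]
      · set d : ℕ → ℝ := fun k => v k - betaFn p k * v 1 with hddef
        have hd : ∀ k, 1 ≤ k → k < n → d k = 0 := by
          intro k hk1 hk2
          have := ih k hk2 hk1
          simp only [hddef]
          rw [this]
          ring
        have hN1 : 1 ≤ n - 1 := by omega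
        have hn' : n = (n-1) + 1 := by omega
        have hEv : ∑ j ∈ Finset.range ((n-1)+1), Smat p (n-1) (j+1) * v (j+1) = v (n-1) := by
          rw [← tsum_row p v (n-1)]
          exact (hE (n-1) hN1).symm
        have hEβ := beta_eigen p hp (n-1) hN1
        have hEd : ∑ j ∈ Finset.range ((n-1)+1), Smat p (n-1) (j+1) * d (j+1)
            = d (n-1) := by
          have hexp : ∀ j : ℕ, Smat p (n-1) (j+1) * d (j+1)
              = Smat p (n-1) (j+1) * v (j+1)
                - (Smat p (n-1) (j+1) * betaFn p (j+1)) * v 1 := by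
            intro j
            simp only [hddef]
            ring
          simp only [hexp]
          rw [Finset.sum_sub_distrib, ← Finset.sum_mul, hEv, hEβ]
        rw [rowSum p d (n-1) hN1] at hEd
        have hdN : d (n-1) = 0 := hd (n-1) hN1 (by omega)
        by_cases h0 : zeck (n-1) 0 = 0
        · rw [if_pos h0] at hEd
          have hterms : ∀ m ∈ Finset.Icc 1 (carryLen (n-1)), Pprod p m * (1 - p (m+1)) *
              (if fibF (2*m) ≤ n-1 then d (n-1 + 1 - fibF (2*m)) else 0) = 0 := by
            intro m hm
            by_cases hF : fibF (2*m) ≤ n-1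
            · have hfp := fibF_pos (2*m)
              rw [if_pos hF, hd (n-1+1-fibF (2*m)) (by omega) (by omega), mul_zero]
            · rw [if_neg hF, mul_zero]
          rw [Finset.sum_eq_zero hterms, add_zero, hdN, mul_zero, zero_add] at hEd
          have hP := Pprod_pos p hp (carryLen (n-1) + 1)
          have hd0 : d ((n-1)+1) = 0 := by
            rcases mul_eq_zero.mp hEd with h | h
            · exact absurd h (ne_of_gt hP)
            · exact h
          have : d n = 0 := by rw [hn']; exact hd0
          have := sub_eq_zero.mp (by simpa only [hddef] using this)
          exact this
        · rw [if_neg h0] at hEd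
          have hterms : ∀ m ∈ Finset.Icc 1 (carryLen (n-1) + 1), Pprod p m * (1 - p (m+1)) *
              (if fibF (2*m-1) ≤ n-1 then d (n-1 + 1 - fibF (2*m-1)) else 0) = 0 := by
            intro m hm
            by_cases hF : fibF (2*m-1) ≤ n-1
            · have hfp := fibF_pos (2*m-1)
              rw [if_pos hF, hd (n-1+1-fibF (2*m-1)) (by omega) (by omega), mul_zero]
            · rw [if_neg hF, mul_zero]
          rw [Finset.sum_eq_zero hterms, add_zero, hdN, mul_zero, zero_add] at hEd
          have hP := Pprod_pos p hp (carryLen (n-1) + 2)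
          have hd0 : d ((n-1)+1) = 0 := by
            rcases mul_eq_zero.mp hEd with h | h
            · exact absurd h (ne_of_gt hP)
            · exact h
          have : d n = 0 := by rw [hn']; exact hd0
          have := sub_eq_zero.mp (by simpa only [hddef] using this)
          exact this
  · intro hβ i hi
    rw [tsum_row p v i]
    have hc : ∀ j ∈ Finset.range (i+1), Smat p i (j+1) * v (j+1)
        = (Smat p i (j+1) * betaFn p (j+1)) * v 1 := by
      intro j _
      rw [hβ (j+1) (by omega)]
      ring
    rw [Finset.sum_congr rfl hc, ← Finset.sum_mul, beta_eigen p hp i hi]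
    exact hβ i hi
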